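/- Let P and Q be probability measures with P ≪ Q, r* = dP/dQ, and assume Var_Q[r*] < ∞. Then Var_Q[r*] ≥ exp(D_KL(P‖Q)) − 1. -/

import Mathlib

open MeasureTheory Real ProbabilityTheory

/-- KL divergence as `E_P[log (dP/dQ)]`. -/
noncomputable def klDiv {X : Type*} [MeasurableSpace X] (P Q : Measure X) : ℝ :=
  ∫ x, Real.log ((P.rnDeriv Q x).toReal) ∂P

/-- The variance of the density ratio `r* = dP/dQ` under `Q` is at least
`exp(D_KL(P‖Q)) − 1`. -/
theorem stmt2 {X : Type*} [MeasurableSpace X] (P Q : Measure X)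
    [IsProbabilityMeasure P] [IsProbabilityMeasure Q] (hPQ : P ≪ Q)
    (hvar : Integrable (fun x => ((P.rnDeriv Q x).toReal) ^ 2) Q) :
    Real.exp (klDiv P Q) - 1 ≤ variance (fun x => (P.rnDeriv Q x).toReal) Q := by
  set r : X → ℝ := fun x => (P.rnDeriv Q x).toReal with hr
  have hrm : Measurable r := (Measure.measurable_rnDeriv P Q).ennreal_toReal
  have hmem : MemLp r 2 Q :=
    (memLp_two_iff_integrable_sq hrm.aestronglyMeasurable).2 hvar
  have hEr : ∫ x, r x ∂Q = 1 := by
    rw [Measure.integral_toReal_rnDeriv hPQ]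
    simp
  have hvdef : variance r Q = (∫ x, r x ^ 2 ∂Q) - 1 := by
    rw [variance_eq_sub hmem]
    simp only [Pi.pow_apply, hEr, one_pow]
  -- change of measure: ∫ r² dQ = ∫ r dP
  have hcm : ∫ x, r x ^ 2 ∂Q = ∫ x, r x ∂P := by
    rw [← MeasureTheory.integral_rnDeriv_smul hPQ (f := r)]
    congr 1 with x
    simp [hr, sq, smul_eq_mul]
  have hrP : Integrable r P := by
    rw [← MeasureTheory.integrable_rnDeriv_smul_iff hPQ]
    refine hvar.congr ?_
    filter_upwards with x
    simp [hr, sq, smul_eq_mul]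
  -- Jensen: exp (∫ log r dP) ≤ ∫ r dP
  have hpos : ∀ᵐ x ∂P, 0 < r x := by
    filter_upwards [Measure.rnDeriv_pos hPQ, hPQ.ae_le (Measure.rnDeriv_lt_top P Q)]
      with x h1 h2
    exact ENNReal.toReal_pos h1.ne' h2.ne
  have hexplog : (fun x => Real.exp (Real.log (r x))) =ᵐ[P] r := by
    filter_upwards [hpos] with x hx using Real.exp_log hx
  have hkl : Real.exp (klDiv P Q) ≤ ∫ x, r x ∂P := by
    by_cases hint : Integrable (fun x => Real.log (r x)) P
    · have := convexOn_exp.map_integral_le (continuous_exp.continuousOn)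
        isClosed_univ (by filter_upwards with x using Set.mem_univ _) hint
        (by exact (hrP.congr hexplog.symm))
      calc Real.exp (klDiv P Q) = Real.exp (∫ x, Real.log (r x) ∂P) := rfl
        _ ≤ ∫ x, Real.exp (Real.log (r x)) ∂P := this
        _ = ∫ x, r x ∂P := integral_congr_ae hexplog
    · have : klDiv P Q = 0 := integral_undef hint
      rw [this, Real.exp_zero]
      have h1 : (1 : ℝ) ≤ ∫ x, r x ∂P := by
        have hv := variance_nonneg r Q
        rw [← hcm]; linarith [hvdef]
      exact h1
  calc Real.exp (klDiv P Q) - 1 ≤ (∫ x, r x ∂P) - 1 := by linarith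
    _ = variance r Q := by rw [hvdef, hcm]
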